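/- arXiv:1804.04972 — 3 statements merged into one kernel-verified Lean document; each statement's English description precedes it below -/
import Mathlib

section
/- For all integers i ≥ 1 and x ∈ ℂ_p: if v_p(x) ≥ −i then v_p(Ψ_q(x)) ≥ −(q^i − 1)/(q − 1), and if v_p(x) > −i then v_p(Ψ_q(x)) > −(q^i − 1)/(q − 1). -/
open PowerSeries

/-- `Ψ ∈ T + T²ℤ[[T]]` satisfies `∑_{j≥0} p^{-j} Ψ(p^j T)^{q^j} = T` (coefficientwise). -/
def IsPsi (p q : ℕ) (Ψ : PowerSeries ℤ) : Prop :=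
  PowerSeries.constantCoeff Ψ = 0 ∧ PowerSeries.coeff 1 Ψ = 1 ∧
  ∀ n : ℕ,
    (∑ j ∈ Finset.range (n + 1),
      ((p : ℚ) ^ j)⁻¹ *
        PowerSeries.coeff n
          ((PowerSeries.rescale ((p : ℚ) ^ j) (Ψ.map (Int.castRingHom ℚ))) ^ (q ^ j)))
      = PowerSeries.coeff n (PowerSeries.X : PowerSeries ℚ)

/-- Evaluation of the entire function defined by an integral power series at a point of a
complete nonarchimedean field. -/
noncomputable def psiEval (Ψ : PowerSeries ℤ) {K : Type} [NormedField K] (x : K) : K :=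
  ∑' i : ℕ, ((PowerSeries.coeff i Ψ : ℤ) : K) * x ^ i

/-- Partial geometric sum `1 + q + ⋯ + q^(i-1)`. -/
private def Aq (q i : ℕ) : ℕ := ∑ t ∈ Finset.range i, q ^ t

private lemma le_Aq (q : ℕ) (hq : 1 ≤ q) (i : ℕ) : i ≤ Aq q i := by
  calc i = ∑ _t ∈ Finset.range i, 1 := by simp
  _ ≤ Aq q i := Finset.sum_le_sum (fun t _ => Nat.one_le_pow t q hq)

private lemma Aq_add (q a b : ℕ) : Aq q (a + b) = Aq q a + q ^ a * Aq q b := by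
  unfold Aq
  rw [Finset.sum_range_add, Finset.mul_sum]
  simp [pow_add]

private lemma Aq_div (q : ℕ) (hq : 2 ≤ q) (i : ℕ) : (q ^ i - 1) / (q - 1) = Aq q i := by
  have h : (q - 1) * Aq q i = q ^ i - 1 := by
    induction i with
    | zero => simp [Aq]
    | succ i ih =>
      have h1 : Aq q (i + 1) = Aq q i + q ^ i := by simp [Aq, Finset.sum_range_succ]
      have h2 : 1 ≤ q ^ i := Nat.one_le_pow _ _ (by omega)
      have h3 : q ^ (i + 1) = q * q ^ i := by ring
      have h4 : (q - 1) * q ^ i = q * q ^ i - q ^ i := by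
        rw [Nat.sub_mul, one_mul]
      have h5 : q ^ i ≤ q * q ^ i := Nat.le_mul_of_pos_left _ (by omega)
      rw [h1, Nat.mul_add, ih, h4, h3]
      set X := q ^ i
      set Y := q * X
      omega
  refine Nat.div_eq_of_eq_mul_left (by omega) ?_
  rw [← h, Nat.mul_comm]

/-- Divisibility of coefficients of powers. -/
private lemma lemA (p : ℤ) (φ : PowerSeries ℤ) (hφ : constantCoeff φ = 0)
    (a b N : ℕ) (H : ∀ m, m < N → p ^ (m * a) ∣ p ^ b * coeff m φ) :
    ∀ k, 1 ≤ k → ∀ n, n + 2 ≤ N + k →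
      p ^ (n * a) ∣ p ^ (k * b) * coeff n (φ ^ k) := by
  have hzero : ∀ k u, u < k → coeff u (φ ^ k) = 0 := by
    intro k u hu
    exact PowerSeries.X_pow_dvd_iff.mp
      (pow_dvd_pow_of_dvd (PowerSeries.X_dvd_iff.mpr hφ) k) u hu
  intro k
  induction k with
  | zero => omega
  | succ k ih =>
    intro _ n hn
    rcases Nat.eq_zero_or_pos k with rfl | hk
    · simpa using H n (by omega)
    · rw [pow_succ, PowerSeries.coeff_mul, Finset.mul_sum]
      refine Finset.dvd_sum ?_
      rintro ⟨u, v⟩ huv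
      have huv' : u + v = n := Finset.HasAntidiagonal.mem_antidiagonal.mp huv
      rcases Nat.eq_zero_or_pos v with rfl | hv
      · have : coeff 0 φ = 0 := by
          rw [PowerSeries.coeff_zero_eq_constantCoeff]; exact hφ
        simp [this]
      rcases lt_or_ge v N with hvN | hvN
      · have h1 := ih hk u (by omega)
        have h2 := H v hvN
        have hexp : p ^ ((k + 1) * b) * (coeff u (φ ^ k) * coeff v φ)
            = (p ^ (k * b) * coeff u (φ ^ k)) * (p ^ b * coeff v φ) := by
          rw [add_mul, one_mul, pow_add]; ring
        rw [hexp, ← huv', add_mul, pow_add]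
        exact mul_dvd_mul h1 h2
      · have hu : u < k := by omega
        rw [hzero k u hu]
        simp

/-- The integral recurrence extracted from the functional equation. -/
private lemma psi_rec (p q : ℕ) (hp : 0 < p) (Ψ : PowerSeries ℤ) (hΨ : IsPsi p q Ψ)
    (n : ℕ) (hn : 1 ≤ n) :
    ∑ j ∈ Finset.range (n + 1), (p : ℤ) ^ (j * (n - 1)) * coeff n (Ψ ^ q ^ j)
      = if n = 1 then 1 else 0 := by
  have h := hΨ.2.2 n
  have hp0 : (p : ℚ) ≠ 0 := by positivity
  have hterm : ∀ j ∈ Finset.range (n + 1),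
      ((p : ℚ) ^ j)⁻¹ *
        PowerSeries.coeff n
          ((PowerSeries.rescale ((p : ℚ) ^ j) (Ψ.map (Int.castRingHom ℚ))) ^ (q ^ j))
      = (((p : ℤ) ^ (j * (n - 1)) * coeff n (Ψ ^ q ^ j) : ℤ) : ℚ) := by
    intro j _
    rw [← map_pow (PowerSeries.rescale ((p : ℚ) ^ j)), PowerSeries.coeff_rescale,
      ← map_pow (PowerSeries.map (Int.castRingHom ℚ)), PowerSeries.coeff_map, eq_intCast]
    have hpow : ((p : ℚ) ^ j) ^ n = (p : ℚ) ^ (j * (n - 1)) * (p : ℚ) ^ j := by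
      obtain ⟨m, rfl⟩ : ∃ m, n = m + 1 := ⟨n - 1, by omega⟩
      rw [← pow_mul, ← pow_add]
      simp [Nat.mul_succ]
    rw [hpow]
    push_cast
    field_simp
  rw [Finset.sum_congr rfl hterm, PowerSeries.coeff_X] at h
  push_cast at h
  split_ifs at h ⊢ with h1
  · exact_mod_cast h
  · exact_mod_cast h

private lemma main_dvd (p q : ℕ) (hp : 0 < p) (hq : 2 ≤ q)
    (Ψ : PowerSeries ℤ) (hΨ : IsPsi p q Ψ) :
    ∀ n i : ℕ, (p : ℤ) ^ (n * i) ∣ (p : ℤ) ^ (Aq q i) * coeff n Ψ := by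
  intro n
  induction n using Nat.strong_induction_on with
  | _ n IH =>
    intro i
    rcases Nat.lt_or_ge n 2 with h2 | h2
    · interval_cases n
      · have : coeff 0 Ψ = 0 := by
          rw [PowerSeries.coeff_zero_eq_constantCoeff]; exact hΨ.1
        simp [this]
      · rw [one_mul, hΨ.2.1, mul_one]
        exact pow_dvd_pow _ (le_Aq q (by omega) i)
    · have hrec := psi_rec p q hp Ψ hΨ n (by omega)
      rw [Finset.sum_range_succ'] at hrec
      have hf0 : (p : ℤ) ^ (0 * (n - 1)) * coeff n (Ψ ^ q ^ 0) = coeff n Ψ := by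
        simp
      rw [hf0, if_neg (by omega : n ≠ 1)] at hrec
      have hc : coeff n Ψ
          = - ∑ j ∈ Finset.range n, (p : ℤ) ^ ((j + 1) * (n - 1)) * coeff n (Ψ ^ q ^ (j + 1)) := by
        linarith
      rw [hc, mul_neg, dvd_neg, Finset.mul_sum]
      refine Finset.dvd_sum ?_
      intro j _
      set j' := j + 1 with hj'
      obtain ⟨m, rfl⟩ : ∃ m, n = m + 1 := ⟨n - 1, by omega⟩
      have hm1 : 1 ≤ m := by omega
      have hsub : m + 1 - 1 = m := by omega
      rcases le_or_gt j' i with hji | hji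
      · -- j' ≤ i : use lemA with a = i - j', b = Aq q (i - j')
        have hkq : 2 ≤ q ^ j' := le_trans hq (Nat.le_self_pow (by omega) q)
        have h1 := lemA (p : ℤ) Ψ hΨ.1 (i - j') (Aq q (i - j')) (m + 1)
          (fun m' hm' => IH m' hm' (i - j')) (q ^ j') (by omega) (m + 1) (by omega)
        -- h1 : p ^ ((m+1) * (i - j')) ∣ p ^ (q ^ j' * Aq q (i - j')) * coeff (Ψ ^ q ^ j')
        set E := q ^ j' * Aq q (i - j') with hE
        set c := coeff (m + 1) (Ψ ^ q ^ j') with hcdef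
        have key : (p : ℤ) ^ ((m + 1) * i) ∣ (p : ℤ) ^ ((m + 1) * j' + E) * c := by
          have h3 := mul_dvd_mul_left ((p : ℤ) ^ ((m + 1) * j')) h1
          rw [← pow_add, ← mul_assoc, ← pow_add] at h3
          have : (m + 1) * j' + (m + 1) * (i - j') = (m + 1) * i := by
            rw [← Nat.mul_add]
            congr 1
            omega
          rwa [this] at h3
        obtain ⟨s, hs⟩ : ∃ s, Aq q j' = j' + s := ⟨Aq q j' - j', by
          have := le_Aq q (by omega) j'
          omega⟩
        have hAq : Aq q i = Aq q j' + q ^ j' * Aq q (i - j') := by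
          rw [← Aq_add]
          congr 1
          omega
        have hexp : Aq q i + j' * (m + 1 - 1) = ((m + 1) * j' + E) + s := by
          rw [hsub, hAq, hs, hE]
          ring
        have hsplit : (p : ℤ) ^ (Aq q i) * ((p : ℤ) ^ (j' * (m + 1 - 1)) * c)
            = (p : ℤ) ^ s * ((p : ℤ) ^ ((m + 1) * j' + E) * c) := by
          rw [← mul_assoc, ← mul_assoc, ← pow_add, ← pow_add, hexp]
          ring_nf
        rw [hsplit]
        exact key.mul_left _
      · -- i < j' : the power of p in front is already big enough
        have hle : (m + 1) * i ≤ Aq q i + j' * (m + 1 - 1) := by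
          rw [hsub]
          have h4 : (i + 1) * m ≤ j' * m := Nat.mul_le_mul_right m (by omega)
          have h5 : i ≤ Aq q i := le_Aq q (by omega) i
          calc (m + 1) * i = i * m + i := by ring
          _ ≤ (i + 1) * m + Aq q i := by nlinarith
          _ ≤ j' * m + Aq q i := by omega
          _ = Aq q i + j' * m := by ring
        calc (p : ℤ) ^ ((m + 1) * i) ∣ (p : ℤ) ^ (Aq q i + j' * (m + 1 - 1)) :=
              pow_dvd_pow _ hle
        _ ∣ (p : ℤ) ^ (Aq q i) * ((p : ℤ) ^ (j' * (m + 1 - 1)) * coeff (m + 1) (Ψ ^ q ^ j')) := by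
              rw [← mul_assoc, ← pow_add]
              exact dvd_mul_right _ _

/-- for `i ≥ 1` and `x ∈ ℂ_p`: if `v_p(x) ≥ -i` then
`v_p(Ψ_q(x)) ≥ -(q^i-1)/(q-1)`, and if `v_p(x) > -i` then `v_p(Ψ_q(x)) > -(q^i-1)/(q-1)`.
Here `ℂ_p` is modelled as a complete algebraically closed nonarchimedean normed field `K`
with `‖p‖ = p⁻¹`, and the conclusions read `‖Ψ_q(x)‖ ≤ p^{(q^i-1)/(q-1)}` (resp. `<`). -/
theorem psi_growth_estimate (p f : ℕ) (hp : p.Prime) (hf : 0 < f)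
    (q : ℕ) (hq : q = p ^ f)
    (Ψ : PowerSeries ℤ) (hΨ : IsPsi p q Ψ)
    (K : Type) [NormedField K] [CompleteSpace K] [IsAlgClosed K]
    (hna : IsUltrametricDist K) (hpK : ‖(p : K)‖ = (p : ℝ)⁻¹) :
    ∀ i : ℕ, 1 ≤ i → ∀ x : K,
      (‖x‖ ≤ (p : ℝ) ^ (i : ℤ) →
        ‖psiEval Ψ x‖ ≤ (p : ℝ) ^ (((q ^ i - 1) / (q - 1) : ℕ) : ℤ)) ∧
      (‖x‖ < (p : ℝ) ^ (i : ℤ) →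
        ‖psiEval Ψ x‖ < (p : ℝ) ^ (((q ^ i - 1) / (q - 1) : ℕ) : ℤ)) := by
  haveI := hna
  intro i hi x
  have hp1 : 1 < p := hp.one_lt
  have hq2 : 2 ≤ q := by
    rw [hq]
    calc 2 ≤ p := hp.two_le
    _ ≤ p ^ f := Nat.le_self_pow (by omega) p
  have hpR : (1 : ℝ) < (p : ℝ) := by exact_mod_cast hp1
  have hpR0 : (0 : ℝ) < (p : ℝ) := by linarith
  set A := Aq q i with hA
  have hAdiv : ((q ^ i - 1) / (q - 1) : ℕ) = A := Aq_div q hq2 i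
  rw [hAdiv]
  have hppos : (0 : ℝ) < (p : ℝ) ^ (i : ℤ) := zpow_pos hpR0 _
  -- coefficient bound
  have hcoef : ∀ n : ℕ, ‖((coeff n Ψ : ℤ) : K)‖ ≤ (p : ℝ) ^ ((A : ℤ) - ((n * i : ℕ) : ℤ)) := by
    intro n
    obtain ⟨d, hd⟩ := main_dvd p q (by omega) hq2 Ψ hΨ n i
    have hdK : (p : K) ^ A * ((coeff n Ψ : ℤ) : K) = (p : K) ^ (n * i) * ((d : ℤ) : K) := by
      exact_mod_cast congrArg (fun z : ℤ => (z : K)) hd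
    have hnrm := congrArg norm hdK
    rw [norm_mul, norm_mul, norm_pow, norm_pow, hpK] at hnrm
    have hdle : ‖((d : ℤ) : K)‖ ≤ 1 := IsUltrametricDist.norm_intCast_le_one K d
    have hApos : (0 : ℝ) < ((p : ℝ)⁻¹) ^ A := by positivity
    have hc_eq : ‖((coeff n Ψ : ℤ) : K)‖
        = (p : ℝ) ^ A * (((p : ℝ)⁻¹) ^ (n * i) * ‖((d : ℤ) : K)‖) := by
      have h0 : ‖((coeff n Ψ : ℤ) : K)‖
          = (((p : ℝ)⁻¹) ^ A)⁻¹ * (((p : ℝ)⁻¹) ^ A * ‖((coeff n Ψ : ℤ) : K)‖) := by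
        rw [← mul_assoc, inv_mul_cancel₀ hApos.ne', one_mul]
      rw [h0, hnrm, ← inv_pow, inv_inv]
    rw [hc_eq]
    have hstep : (p : ℝ) ^ A * (((p : ℝ)⁻¹) ^ (n * i) * ‖((d : ℤ) : K)‖)
        ≤ (p : ℝ) ^ A * ((p : ℝ)⁻¹) ^ (n * i) :=
      mul_le_mul_of_nonneg_left (mul_le_of_le_one_right (by positivity) hdle) (by positivity)
    refine hstep.trans (le_of_eq ?_)
    rw [zpow_sub₀ hpR0.ne', zpow_natCast, zpow_natCast, div_eq_mul_inv, inv_pow]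
  set r := ‖x‖ * ((p : ℝ) ^ (i : ℤ))⁻¹ with hr
  have hterm : ∀ n : ℕ, ‖((coeff n Ψ : ℤ) : K) * x ^ n‖ ≤ (p : ℝ) ^ (A : ℤ) * r ^ n := by
    intro n
    rw [norm_mul, norm_pow]
    have h1 : ‖((coeff n Ψ : ℤ) : K)‖ * ‖x‖ ^ n
        ≤ (p : ℝ) ^ ((A : ℤ) - ((n * i : ℕ) : ℤ)) * ‖x‖ ^ n :=
      mul_le_mul_of_nonneg_right (hcoef n) (by positivity)
    refine h1.trans (le_of_eq ?_)
    have e1 : ((p : ℝ) ^ (i : ℤ)) ^ n = (p : ℝ) ^ ((n * i : ℕ) : ℤ) := by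
      rw [← zpow_natCast ((p : ℝ) ^ (i : ℤ)) n, ← zpow_mul]
      congr 1
      push_cast
      ring
    rw [hr, mul_pow, inv_pow, e1, zpow_sub₀ hpR0.ne']
    ring
  have hr0 : 0 ≤ r := by positivity
  constructor
  · intro hx
    have hr1 : r ≤ 1 := by
      rw [hr, ← div_eq_mul_inv, div_le_one hppos]; exact hx
    refine IsUltrametricDist.norm_tsum_le_of_forall_le_of_nonneg (by positivity) ?_
    intro n
    refine (hterm n).trans ?_
    calc (p : ℝ) ^ (A : ℤ) * r ^ n ≤ (p : ℝ) ^ (A : ℤ) * 1 :=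
          mul_le_mul_of_nonneg_left (pow_le_one₀ hr0 hr1) (by positivity)
    _ = (p : ℝ) ^ (A : ℤ) := mul_one _
  · intro hx
    have hr1 : r < 1 := by
      rw [hr, ← div_eq_mul_inv, div_lt_one hppos]; exact hx
    have hbound : ∀ n : ℕ, ‖((coeff n Ψ : ℤ) : K) * x ^ n‖ ≤ (p : ℝ) ^ (A : ℤ) * r := by
      intro n
      cases n with
      | zero =>
        have hc0 : coeff 0 Ψ = 0 := by
          rw [PowerSeries.coeff_zero_eq_constantCoeff]; exact hΨ.1
        rw [hc0]
        simp
        positivity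
      | succ n =>
        refine (hterm (n + 1)).trans ?_
        have h2 : r ^ (n + 1) ≤ r := by
          have := pow_le_pow_of_le_one hr0 hr1.le (by omega : 1 ≤ n + 1)
          rwa [pow_one] at this
        exact mul_le_mul_of_nonneg_left h2 (by positivity)
    have hts := IsUltrametricDist.norm_tsum_le_of_forall_le_of_nonneg (by positivity) hbound
    refine lt_of_le_of_lt hts ?_
    calc (p : ℝ) ^ (A : ℤ) * r < (p : ℝ) ^ (A : ℤ) * 1 :=
          mul_lt_mul_of_pos_left hr1 (zpow_pos hpR0 _)
    _ = (p : ℝ) ^ (A : ℤ) := mul_one _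
end

section
/- Ψ_q restricts to a bijective (bianalytic) map from the open disc {x ∈ ℂ_p : v_p(x) > −1} onto itself. -/
open PowerSeries

/-- From the functional equation, every coefficient `c_{m+2}` of `Ψ` is divisible by
`p^{m+1}`. -/
lemma psi_coeff_dvd (p q : ℕ) (hp : p.Prime) (Ψ : PowerSeries ℤ) (hΨ : IsPsi p q Ψ)
    (m : ℕ) : (p : ℤ) ^ (m + 1) ∣ PowerSeries.coeff (m + 2) Ψ := by
  set n : ℕ := m + 2 with hn
  have hp0 : (p : ℚ) ≠ 0 := by exact_mod_cast hp.ne_zero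
  have key := hΨ.2.2 n
  rw [Finset.sum_range_succ'] at key
  have hcoe : ∀ (j M : ℕ),
      PowerSeries.coeff n ((PowerSeries.rescale ((p:ℚ)^j) (Ψ.map (Int.castRingHom ℚ))) ^ M)
        = ((p:ℚ)^j)^n * ((PowerSeries.coeff n (Ψ ^ M) : ℤ) : ℚ) := by
    intro j M
    rw [show (PowerSeries.rescale ((p:ℚ)^j) (Ψ.map (Int.castRingHom ℚ))) ^ M
        = PowerSeries.rescale ((p:ℚ)^j) ((Ψ ^ M).map (Int.castRingHom ℚ)) from by
      rw [map_pow, map_pow], PowerSeries.coeff_rescale, PowerSeries.coeff_map]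
    simp
  have hzero : PowerSeries.coeff n (PowerSeries.X : PowerSeries ℚ) = 0 := by
    rw [PowerSeries.coeff_X]; simp [hn]
  have hterm : ∀ j : ℕ,
      ((p : ℚ) ^ (j+1))⁻¹ *
        PowerSeries.coeff n
          ((PowerSeries.rescale ((p : ℚ) ^ (j+1)) (Ψ.map (Int.castRingHom ℚ))) ^ (q ^ (j+1)))
      = (((p:ℤ)^((j+1)*(m+1)) * PowerSeries.coeff n (Ψ ^ (q ^ (j+1))) : ℤ) : ℚ) := by
    intro j
    rw [hcoe]
    have hexp : (j+1) * n = (j+1) + (j+1)*(m+1) := by rw [hn]; ring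
    rw [← pow_mul, hexp, pow_add ((p:ℚ)) (j+1) ((j+1)*(m+1))]
    push_cast
    field_simp
  have hzeroterm :
      ((p : ℚ) ^ 0)⁻¹ *
        PowerSeries.coeff n
          ((PowerSeries.rescale ((p : ℚ) ^ 0) (Ψ.map (Int.castRingHom ℚ))) ^ (q ^ 0))
        = ((PowerSeries.coeff n Ψ : ℤ) : ℚ) := by
    rw [hcoe]; simp
  rw [hzero, hzeroterm] at key
  simp only [hterm] at key
  have hint : PowerSeries.coeff n Ψ
      = - ∑ j ∈ Finset.range (n - 1 + 1),
          (p:ℤ)^((j+1)*(m+1)) * PowerSeries.coeff n (Ψ ^ (q ^ (j+1))) := by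
    have : ((PowerSeries.coeff n Ψ : ℤ) : ℚ)
        = ((- ∑ j ∈ Finset.range (n - 1 + 1),
            (p:ℤ)^((j+1)*(m+1)) * PowerSeries.coeff n (Ψ ^ (q ^ (j+1))) : ℤ) : ℚ) := by
      push_cast
      have hrange : n - 1 + 1 = n := by omega
      rw [hrange]
      push_cast at key
      linarith [key]
    exact_mod_cast this
  rw [hint]
  apply Dvd.dvd.neg_right
  apply Finset.dvd_sum
  intro j _
  exact Dvd.dvd.mul_right (pow_dvd_pow _ (Nat.le_mul_of_pos_left _ j.succ_pos)) _

section analytic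
variable {K : Type} [NormedField K] [CompleteSpace K]

lemma psi_norm_sub_le_max (hna : IsUltrametricDist K) (a b : K) :
    ‖a - b‖ ≤ max ‖a‖ ‖b‖ := by
  rw [sub_eq_add_neg]
  refine (IsUltrametricDist.norm_add_le_max a (-b)).trans ?_
  simp

lemma tail_summable (c : ℕ → ℤ) {p : ℕ} (hp : 0 < p)
    (hc : ∀ n : ℕ, ‖((c (n+2) : ℤ) : K)‖ ≤ ((p:ℝ)⁻¹)^(n+1))
    {R : ℝ} (hRp : R < p) (x : K) (hx : ‖x‖ ≤ R) :
    Summable (fun n : ℕ => ((c (n+2) : ℤ) : K) * x^(n+2)) := by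
  have hR0 : 0 ≤ R := le_trans (norm_nonneg x) hx
  have hp0 : (0:ℝ) < p := by exact_mod_cast hp
  have hr0 : 0 ≤ R/p := div_nonneg hR0 hp0.le
  have hr1 : R/p < 1 := (div_lt_one hp0).2 hRp
  apply Summable.of_norm_bounded (g := fun n : ℕ => (R*(R/p)) * (R/p)^n)
    ((summable_geometric_of_lt_one hr0 hr1).mul_left _)
  intro n
  calc ‖((c (n+2) : ℤ) : K) * x^(n+2)‖ = ‖((c (n+2) : ℤ) : K)‖ * ‖x‖^(n+2) := by
        rw [norm_mul, norm_pow]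
    _ ≤ ((p:ℝ)⁻¹)^(n+1) * R^(n+2) :=
        mul_le_mul (hc n) (pow_le_pow_left₀ (norm_nonneg x) hx _)
          (pow_nonneg (norm_nonneg x) _) (pow_nonneg (inv_nonneg.2 hp0.le) _)
    _ = (R*(R/p)) * (R/p)^n := by rw [div_eq_mul_inv]; ring

lemma tail_diff (hna : IsUltrametricDist K) (c : ℕ → ℤ) {p : ℕ} (hp : 0 < p)
    (hc : ∀ n : ℕ, ‖((c (n+2) : ℤ) : K)‖ ≤ ((p:ℝ)⁻¹)^(n+1))
    {R : ℝ} (hRp : R < p) (x y : K) (hx : ‖x‖ ≤ R) (hy : ‖y‖ ≤ R) :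
    ‖(∑' n : ℕ, ((c (n+2) : ℤ) : K) * x^(n+2)) - ∑' n : ℕ, ((c (n+2) : ℤ) : K) * y^(n+2)‖
      ≤ (R/p) * ‖x - y‖ := by
  have hR0 : 0 ≤ R := le_trans (norm_nonneg x) hx
  have hp0 : (0:ℝ) < p := by exact_mod_cast hp
  have hr0 : 0 ≤ R/p := div_nonneg hR0 hp0.le
  have hr1 : R/p < 1 := (div_lt_one hp0).2 hRp
  have hsx := tail_summable c hp hc hRp x hx
  have hsy := tail_summable c hp hc hRp y hy
  rw [← Summable.tsum_sub hsx hsy]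
  apply IsUltrametricDist.norm_tsum_le_of_forall_le_of_nonneg
    (mul_nonneg hr0 (norm_nonneg _))
  intro n
  have hgeom := geom_sum₂_mul x y (n+2)
  have hsum : ‖∑ i ∈ Finset.range (n+2), x^i * y^(n+2-1-i)‖ ≤ R^(n+1) := by
    apply IsUltrametricDist.norm_sum_le_of_forall_le_of_nonneg (pow_nonneg hR0 _)
    intro i hi
    rw [Finset.mem_range] at hi
    calc ‖x^i * y^(n+2-1-i)‖ = ‖x‖^i * ‖y‖^(n+2-1-i) := by rw [norm_mul, norm_pow, norm_pow]
      _ ≤ R^i * R^(n+2-1-i) :=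
          mul_le_mul (pow_le_pow_left₀ (norm_nonneg x) hx _)
            (pow_le_pow_left₀ (norm_nonneg y) hy _) (pow_nonneg (norm_nonneg y) _)
            (pow_nonneg hR0 _)
      _ = R^(n+1) := by rw [← pow_add]; congr 1; omega
  calc ‖((c (n+2) : ℤ) : K) * x^(n+2) - ((c (n+2) : ℤ) : K) * y^(n+2)‖
      = ‖((c (n+2) : ℤ) : K)‖ * (‖∑ i ∈ Finset.range (n+2), x^i * y^(n+2-1-i)‖ * ‖x - y‖) := by
        rw [← mul_sub, ← hgeom, norm_mul, norm_mul]
    _ ≤ ((p:ℝ)⁻¹)^(n+1) * (R^(n+1) * ‖x - y‖) := by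
        apply mul_le_mul (hc n) (mul_le_mul_of_nonneg_right hsum (norm_nonneg _))
          (by positivity) (by positivity)
    _ = (R/p)^(n+1) * ‖x - y‖ := by rw [div_eq_mul_inv, mul_pow]; ring
    _ ≤ (R/p) * ‖x - y‖ := by
        apply mul_le_mul_of_nonneg_right _ (norm_nonneg _)
        simpa using pow_le_pow_of_le_one hr0 hr1.le (by omega : 1 ≤ n+1)

lemma psi_split (c : ℕ → ℤ) (hc0 : c 0 = 0) (hc1 : c 1 = 1) (x : K)
    (hs2 : Summable (fun n : ℕ => ((c (n+2) : ℤ) : K) * x^(n+2))) :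
    ∑' i : ℕ, ((c i : ℤ) : K) * x^i = x + ∑' n : ℕ, ((c (n+2) : ℤ) : K) * x^(n+2) := by
  have hs1 : Summable (fun n : ℕ => ((c (n+1) : ℤ) : K) * x^(n+1)) :=
    (summable_nat_add_iff 1).mp hs2
  have hs0 : Summable (fun i : ℕ => ((c i : ℤ) : K) * x^i) :=
    (summable_nat_add_iff 1).mp hs1
  rw [Summable.tsum_eq_zero_add hs0, Summable.tsum_eq_zero_add hs1]
  simp [hc0, hc1]

end analytic

/-- `Ψ_q` restricts to a bijection of the open disc
`{x ∈ ℂ_p : v_p(x) > -1} = {x : ‖x‖ < p}` onto itself. Here `ℂ_p` is modelled as a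
complete algebraically closed nonarchimedean normed field `K` with `‖p‖ = p⁻¹`. -/
theorem psi_bijective_on_disc (p f : ℕ) (hp : p.Prime) (hf : 0 < f)
    (q : ℕ) (hq : q = p ^ f)
    (Ψ : PowerSeries ℤ) (hΨ : IsPsi p q Ψ)
    (K : Type) [NormedField K] [CompleteSpace K] [IsAlgClosed K]
    (hna : IsUltrametricDist K) (hpK : ‖(p : K)‖ = (p : ℝ)⁻¹) :
    Set.BijOn (psiEval Ψ) {x : K | ‖x‖ < (p : ℝ)} {x : K | ‖x‖ < (p : ℝ)} := by
  haveI := hna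
  have hp0 : (0:ℝ) < p := by exact_mod_cast hp.pos
  set c : ℕ → ℤ := fun i => PowerSeries.coeff i Ψ with hcdef
  have hc0 : c 0 = 0 := by
    show PowerSeries.coeff 0 Ψ = 0
    rw [PowerSeries.coeff_zero_eq_constantCoeff]; exact hΨ.1
  have hc1 : c 1 = 1 := hΨ.2.1
  have hcn : ∀ n : ℕ, ‖((c (n+2) : ℤ) : K)‖ ≤ ((p:ℝ)⁻¹)^(n+1) := by
    intro n
    obtain ⟨e, he⟩ := psi_coeff_dvd p q hp Ψ hΨ n
    have he2 : c (n+2) = (p:ℤ)^(n+1) * e := he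
    have he' : ((c (n+2) : ℤ) : K) = ((p:K))^(n+1) * ((e : ℤ) : K) := by
      rw [he2]; push_cast; ring
    rw [he', norm_mul, norm_pow, hpK]
    calc ((p:ℝ)⁻¹)^(n+1) * ‖((e : ℤ) : K)‖ ≤ ((p:ℝ)⁻¹)^(n+1) * 1 :=
          mul_le_mul_of_nonneg_left (IsUltrametricDist.norm_intCast_le_one K e)
            (by positivity)
      _ = ((p:ℝ)⁻¹)^(n+1) := mul_one _
  set T : K → K := fun x => ∑' n : ℕ, ((c (n+2) : ℤ) : K) * x^(n+2) with hTdef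
  have hT0 : T 0 = 0 := by
    simp [hTdef]
  have hTdiff : ∀ x y : K, ‖x‖ < p → ‖y‖ < p →
      ‖T x - T y‖ ≤ (max ‖x‖ ‖y‖ / p) * ‖x - y‖ := by
    intro x y hx hy
    exact tail_diff hna c hp.pos hcn (max_lt hx hy) x y (le_max_left _ _) (le_max_right _ _)
  have hTnorm : ∀ x : K, ‖x‖ < p → ‖T x‖ ≤ (‖x‖/p) * ‖x‖ := by
    intro x hx
    have h := hTdiff x 0 hx (by simpa using hp0)
    simpa [hT0, max_eq_left (norm_nonneg x)] using h
  have hpsi : ∀ x : K, ‖x‖ < p → psiEval Ψ x = x + T x := by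
    intro x hx
    exact psi_split c hc0 hc1 x (tail_summable c hp.pos hcn hx x le_rfl)
  have hmaps : Set.MapsTo (psiEval Ψ) {x : K | ‖x‖ < (p : ℝ)} {x : K | ‖x‖ < (p : ℝ)} := by
    intro x hx
    simp only [Set.mem_setOf_eq] at hx ⊢
    rw [hpsi x hx]
    have h1 : ‖T x‖ ≤ ‖x‖ := by
      refine (hTnorm x hx).trans ?_
      calc (‖x‖/p) * ‖x‖ ≤ 1 * ‖x‖ :=
            mul_le_mul_of_nonneg_right ((div_lt_one hp0).2 hx).le (norm_nonneg _)
        _ = ‖x‖ := one_mul _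
    calc ‖x + T x‖ ≤ max ‖x‖ ‖T x‖ := IsUltrametricDist.norm_add_le_max x (T x)
      _ ≤ ‖x‖ := max_le le_rfl h1
      _ < p := hx
  refine ⟨hmaps, ?_, ?_⟩
  · -- injectivity
    intro x hx y hy hxy
    simp only [Set.mem_setOf_eq] at hx hy
    by_contra hne
    have hxy0 : 0 < ‖x - y‖ := by
      rw [norm_pos_iff, sub_ne_zero]; exact hne
    rw [hpsi x hx, hpsi y hy] at hxy
    have hsub : x - y = T y - T x := by linear_combination hxy
    have hle : ‖x - y‖ ≤ (max ‖y‖ ‖x‖ / p) * ‖y - x‖ := by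
      rw [hsub]; exact hTdiff y x hy hx
    rw [norm_sub_rev y x] at hle
    have hlt : (max ‖y‖ ‖x‖ / p) * ‖x - y‖ < 1 * ‖x - y‖ := by
      apply mul_lt_mul_of_pos_right _ hxy0
      exact (div_lt_one hp0).2 (max_lt hy hx)
    rw [one_mul] at hlt
    exact absurd (hle.trans_lt hlt) (lt_irrefl _)
  · -- surjectivity
    intro y hy
    simp only [Set.mem_setOf_eq] at hy
    set r : ℝ := ‖y‖ with hrdef
    have hr0 : 0 ≤ r := norm_nonneg y
    have hrp : r < p := hy
    set S := Metric.closedBall (0:K) r with hSdef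
    haveI : CompleteSpace S := Metric.isClosed_closedBall.completeSpace_coe
    haveI : Nonempty S := ⟨⟨0, by simp [hSdef, hr0]⟩⟩
    have hmemS : ∀ z : S, ‖(z : K)‖ ≤ r := fun z =>
      mem_closedBall_zero_iff.mp z.2
    have hTz : ∀ z : S, ‖T (z : K)‖ ≤ r := by
      intro z
      have hz := hmemS z
      have hzp : ‖(z:K)‖ < p := lt_of_le_of_lt hz hrp
      refine (hTnorm _ hzp).trans ?_
      calc (‖(z:K)‖/p) * ‖(z:K)‖ ≤ (r/p) * r := by gcongr
        _ ≤ 1 * r := mul_le_mul_of_nonneg_right ((div_lt_one hp0).2 hrp).le hr0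
        _ = r := one_mul _
    set g : S → S := fun z => ⟨y - T (z : K), by
      simp only [hSdef, Metric.mem_closedBall, dist_zero_right]
      calc ‖y - T (z:K)‖ ≤ max ‖y‖ ‖T (z:K)‖ := psi_norm_sub_le_max hna y _
        _ ≤ r := max_le le_rfl (hTz z)⟩ with hgdef
    set Kc : NNReal := ⟨r/p, div_nonneg hr0 hp0.le⟩ with hKc
    have hcontr : ContractingWith Kc g := by
      constructor
      · rw [← NNReal.coe_lt_coe]
        exact (div_lt_one hp0).2 hrp
      · apply LipschitzWith.of_dist_le_mul
        intro a b
        rw [Subtype.dist_eq, Subtype.dist_eq, dist_eq_norm, dist_eq_norm]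
        have hval : ((g a : K)) - ((g b : K)) = T (b:K) - T (a:K) := by
          simp only [hgdef]; ring
        rw [hval]
        calc ‖T (b:K) - T (a:K)‖ ≤ (max ‖(b:K)‖ ‖(a:K)‖ / p) * ‖(b:K) - (a:K)‖ :=
              hTdiff _ _ (lt_of_le_of_lt (hmemS b) hrp) (lt_of_le_of_lt (hmemS a) hrp)
          _ ≤ (r/p) * ‖(a:K) - (b:K)‖ := by
              rw [norm_sub_rev ((b:K))]
              gcongr
              exact max_le (hmemS b) (hmemS a)
          _ = Kc * ‖(a:K) - (b:K)‖ := rfl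
    set x0 : S := hcontr.fixedPoint g with hx0
    have hfix : g x0 = x0 := hcontr.fixedPoint_isFixedPt
    have hxval : y - T (x0 : K) = (x0 : K) := by
      have h := congrArg (Subtype.val) hfix
      simpa [hgdef] using h
    have hx0p : ‖(x0:K)‖ < p := lt_of_le_of_lt (hmemS x0) hrp
    refine ⟨(x0 : K), hx0p, ?_⟩
    rw [hpsi _ hx0p]
    linear_combination -hxval
end

section
/- The inverse power series β_q ∈ T + T²ℤ[[T]] of Ψ_q (i.e., Ψ_q(β_q(T)) = T = β_q(Ψ_q(T)) in ℤ[[T]]) has exact disc of convergence {T ∈ ℂ_p : v_p(T) > −1}: it converges for v_p(T) > −1 and diverges for some T with v_p(T) = −1. -/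
open PowerSeries

/-- `β` is the compositional inverse of `Ψ` in `T + T²ℤ[[T]]`: `Ψ(β(T)) = T = β(Ψ(T))`,
expressed coefficientwise (both series have zero constant term, so only the terms with
`i ≤ n` contribute to the `n`-th coefficient of the composition). -/
def IsCompInv (Ψ β : PowerSeries ℤ) : Prop :=
  PowerSeries.constantCoeff β = 0 ∧ PowerSeries.coeff 1 β = 1 ∧
  (∀ n : ℕ, (∑ i ∈ Finset.range (n + 1),
      PowerSeries.coeff i Ψ * PowerSeries.coeff n (β ^ i))
    = PowerSeries.coeff n (PowerSeries.X : PowerSeries ℤ)) ∧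
  (∀ n : ℕ, (∑ i ∈ Finset.range (n + 1),
      PowerSeries.coeff i β * PowerSeries.coeff n (Ψ ^ i))
    = PowerSeries.coeff n (PowerSeries.X : PowerSeries ℤ))


open Finset

open scoped Classical

namespace BetaAux



lemma prod_shift (c : ℤ) (s : Finset ℕ) (m : ℕ → ℕ) (x e : ℕ → ℤ)
    (h : ∀ i ∈ s, c ^ (m i + 1) ∣ (x i - e i * c ^ m i)) :
    c ^ ((∑ i ∈ s, m i) + 1) ∣ ((∏ i ∈ s, x i) - (∏ i ∈ s, e i) * c ^ (∑ i ∈ s, m i)) := by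
  induction s using Finset.cons_induction with
  | empty => simp
  | cons a t ha ih =>
    obtain ⟨u, hu⟩ := h a (Finset.mem_cons_self a t)
    obtain ⟨v, hv⟩ := ih (fun i hi => h i (Finset.mem_cons.2 (Or.inr hi)))
    have hx : x a = e a * c ^ m a + c ^ (m a + 1) * u := by linarith
    have hX : (∏ i ∈ t, x i)
        = (∏ i ∈ t, e i) * c ^ (∑ i ∈ t, m i) + c ^ ((∑ i ∈ t, m i) + 1) * v := by linarith
    refine ⟨e a * v + u * (∏ i ∈ t, e i) + c * (u * v), ?_⟩
    simp only [Finset.prod_cons, Finset.sum_cons]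
    rw [hx, hX]
    ring

lemma coeff_pow_eq_zero' {φ : PowerSeries ℤ} (hφ : constantCoeff φ = 0)
    {n m : ℕ} (h : n < m) : coeff n (φ ^ m) = 0 := by
  rw [coeff_pow]
  refine Finset.sum_eq_zero fun l hl => ?_
  obtain ⟨hsum, -⟩ := Finset.mem_finsuppAntidiag.1 hl
  by_contra hne
  have h1 : ∀ t ∈ range m, 1 ≤ l t := by
    intro t ht
    rcases Nat.eq_zero_or_pos (l t) with h0 | h1
    · exact absurd (Finset.prod_eq_zero ht
        (by rw [h0, coeff_zero_eq_constantCoeff, hφ])) hne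
    · exact h1
  have hmn : m ≤ n := by
    calc m = ∑ _t ∈ range m, 1 := by simp
    _ ≤ ∑ t ∈ range m, l t := Finset.sum_le_sum h1
    _ = n := hsum
  omega

lemma congpow (c : ℤ) {φ : PowerSeries ℤ} (hφ : constantCoeff φ = 0)
    (d : ℕ → ℤ) (hd0 : d 0 = 0) (n i : ℕ) (h2 : 2 ≤ i) (hin : i ≤ n)
    (hd : ∀ l, 1 ≤ l → l < n → c ^ l ∣ (coeff l φ - d l * c ^ (l - 1))) :
    c ^ (n - i + 1) ∣
      (coeff n (φ ^ i) -
        c ^ (n - i) * ∑ l ∈ finsuppAntidiag (range i) n, ∏ t ∈ range i, d (l t)) := by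
  rw [coeff_pow, Finset.mul_sum, ← Finset.sum_sub_distrib]
  refine Finset.dvd_sum fun l hl => ?_
  obtain ⟨hsum, -⟩ := Finset.mem_finsuppAntidiag.1 hl
  have hsum' : ∑ t ∈ range i, l t = n := hsum
  by_cases h0 : ∃ t ∈ range i, l t = 0
  · obtain ⟨t, ht, h0⟩ := h0
    rw [Finset.prod_eq_zero ht (by rw [h0, coeff_zero_eq_constantCoeff, hφ]),
        Finset.prod_eq_zero ht (by rw [h0, hd0]), mul_zero, sub_zero]
    exact dvd_zero _
  · push_neg at h0
    have h1 : ∀ t ∈ range i, 1 ≤ l t := fun t ht => Nat.one_le_iff_ne_zero.2 (h0 t ht)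
    have hlt : ∀ t ∈ range i, l t < n := by
      intro t ht
      have he : l t + ∑ s ∈ (range i).erase t, l s = ∑ s ∈ range i, l s :=
        Finset.add_sum_erase (range i) l ht
      have h2' : i - 1 ≤ ∑ s ∈ (range i).erase t, l s := by
        calc i - 1 = ∑ _s ∈ (range i).erase t, 1 := by
              rw [Finset.sum_const, smul_eq_mul, mul_one, Finset.card_erase_of_mem ht,
                Finset.card_range]
        _ ≤ _ := Finset.sum_le_sum fun s hs => h1 s (Finset.mem_of_mem_erase hs)
      omega
    have e1 : ∑ t ∈ range i, l t = (∑ t ∈ range i, (l t - 1)) + ∑ _t ∈ range i, 1 := by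
      rw [← Finset.sum_add_distrib]
      exact Finset.sum_congr rfl fun t ht => by have := h1 t ht; omega
    have hm : (∑ t ∈ range i, (l t - 1)) = n - i := by
      simp only [Finset.sum_const, smul_eq_mul, mul_one, Finset.card_range] at e1
      omega
    have key := prod_shift c (range i) (fun t => l t - 1)
      (fun t => coeff (l t) φ) (fun t => d (l t)) ?_
    · rw [hm] at key
      have : (∏ t ∈ range i, coeff (l t) φ) - c ^ (n - i) * ∏ t ∈ range i, d (l t)
          = (∏ t ∈ range i, coeff (l t) φ) - (∏ t ∈ range i, d (l t)) * c ^ (n - i) := by ring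
      rw [this]
      exact key
    · intro t ht
      have h1t := h1 t ht
      have : l t - 1 + 1 = l t := by omega
      rw [this]
      exact hd (l t) h1t (hlt t ht)



lemma sum_cast (p : ℕ) (d : ℕ → ℤ) (n i : ℕ) :
    ((∑ l ∈ finsuppAntidiag (range i) n, ∏ t ∈ range i, d (l t) : ℤ) : ZMod p)
      = coeff n ((mk fun l => ((d l : ℤ) : ZMod p)) ^ i) := by
  rw [coeff_pow]
  push_cast
  simp [coeff_mk]

lemma coeff_indicator_pow (p f : ℕ) (hp : p.Prime) (hf : 0 < f) (q : ℕ) (hq : q = p ^ f)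
    (n : ℕ) :
    coeff n ((mk fun m => if ∃ e : ℕ, m = q ^ e then (1 : ZMod p) else 0) ^ q)
      = if ∃ e : ℕ, n = q ^ (e + 1) then 1 else 0 := by
  haveI : Fact p.Prime := ⟨hp⟩
  haveI hchar : CharP (PowerSeries (ZMod p)) p :=
    charP_of_injective_ringHom (f := (C (R := ZMod p))) PowerSeries.C_injective p
  have hq2 : 2 ≤ q := by
    rw [hq]
    calc 2 = 2 ^ 1 := by norm_num
    _ ≤ p ^ 1 := by exact Nat.pow_le_pow_left hp.two_le 1
    _ ≤ p ^ f := Nat.pow_le_pow_right hp.pos hf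
  have hq1 : 1 < q := hq2
  set H : PowerSeries (ZMod p) := mk fun m => if ∃ e : ℕ, m = q ^ e then (1 : ZMod p) else 0
    with hH
  set P : PowerSeries (ZMod p) := ∑ e ∈ range (n + 1), (X : (ZMod p)⟦X⟧) ^ q ^ e with hP
  have hcoeffP : ∀ m, coeff m P
      = if ∃ e : ℕ, e ≤ n ∧ m = q ^ e then 1 else 0 := by
    intro m
    rw [hP, map_sum]
    simp only [coeff_X_pow]
    by_cases hex : ∃ e : ℕ, e ≤ n ∧ m = q ^ e
    · obtain ⟨e, hen, he⟩ := hex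
      rw [Finset.sum_eq_single e]
      · rw [if_pos he, if_pos ⟨e, hen, he⟩]
      · intro e' _ hne
        rw [if_neg]
        intro hme'
        have heq : q ^ e' = q ^ e := by rw [← hme', he]
        exact hne (Nat.pow_right_injective hq2 heq)
      · intro habs
        have := Nat.lt_pow_self (n := e) hq1
        exact absurd (Finset.mem_range.2 (by omega)) habs
    · rw [if_neg hex]
      refine Finset.sum_eq_zero fun e he => ?_
      rw [if_neg]
      intro hme
      have hen := Finset.mem_range.1 he
      exact hex ⟨e, by omega, hme⟩
  have hkey : ∀ m ≤ n, coeff m P = coeff m H := by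
    intro m hm
    rw [hcoeffP, hH, coeff_mk]
    congr 1
    apply propext
    constructor
    · rintro ⟨e, -, he⟩; exact ⟨e, he⟩
    · rintro ⟨e, he⟩
      refine ⟨e, ?_, he⟩
      have := Nat.lt_pow_self (n := e) hq1
      omega
  have hq0 : q ≠ 0 := by omega
  have hdvd : (X : (ZMod p)⟦X⟧) ^ (n + 1) ∣ (H - P) := by
    rw [X_pow_dvd_iff]
    intro m hm
    rw [map_sub, hkey m (by omega), sub_self]
  have hsplit : H ^ q = P ^ q + (H - P) ^ q := by
    conv_lhs => rw [show H = P + (H - P) by ring]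
    rw [hq, add_pow_char_pow]
  have hcR : coeff n ((H - P) ^ q) = 0 := by
    have : (X : (ZMod p)⟦X⟧) ^ (n + 1) ∣ (H - P) ^ q :=
      hdvd.trans (dvd_pow_self _ hq0)
    exact X_pow_dvd_iff.1 this n (by omega)
  have hcP : coeff n (P ^ q) = if ∃ e : ℕ, n = q ^ (e + 1) then 1 else 0 := by
    rw [hP, hq, sum_pow_char_pow, ← hq]
    rw [map_sum]
    simp only [← pow_mul, ← pow_succ, coeff_X_pow]
    by_cases hex : ∃ e : ℕ, n = q ^ (e + 1)
    · obtain ⟨e, he⟩ := hex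
      have hen : e ∈ range (n + 1) := by
        refine Finset.mem_range.2 ?_
        have := Nat.lt_pow_self (n := e + 1) hq1
        omega
      rw [if_pos ⟨e, he⟩, Finset.sum_eq_single e]
      · rw [if_pos he]
      · intro e' _ hne
        rw [if_neg]
        intro hne'
        have heq : q ^ (e' + 1) = q ^ (e + 1) := by rw [← hne', he]
        have := Nat.pow_right_injective hq2 heq
        exact hne (by omega)
      · intro habs; exact absurd hen habs
    · rw [if_neg hex]
      refine Finset.sum_eq_zero fun e _ => if_neg fun hne => hex ⟨e, hne⟩
  rw [hsplit, map_add, hcR, add_zero, hcP]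



lemma intrec (p q : ℕ) (hp : p.Prime) (Ψ : PowerSeries ℤ) (hΨ : IsPsi p q Ψ)
    (n : ℕ) (hn : 2 ≤ n) :
    ∑ j ∈ range (n + 1), (p : ℤ) ^ (j * (n - 1)) * coeff n (Ψ ^ q ^ j) = 0 := by
  have h := hΨ.2.2 n
  rw [coeff_X, if_neg (by omega)] at h
  have hp0 : (p : ℚ) ≠ 0 := Nat.cast_ne_zero.2 hp.pos.ne'
  have hterm : ∀ j : ℕ,
      ((p : ℚ) ^ j)⁻¹ *
        coeff n ((rescale ((p : ℚ) ^ j) (Ψ.map (Int.castRingHom ℚ))) ^ (q ^ j))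
      = (((p : ℤ) ^ (j * (n - 1)) * coeff n (Ψ ^ q ^ j) : ℤ) : ℚ) := by
    intro j
    rw [← map_pow (rescale ((p : ℚ) ^ j)), coeff_rescale,
      ← map_pow (PowerSeries.map (Int.castRingHom ℚ)), coeff_map]
    have hppow : ((p : ℚ) ^ j) ≠ 0 := pow_ne_zero _ hp0
    have hexp : ((p : ℚ) ^ j) ^ n = (p : ℚ) ^ (j * (n - 1)) * (p : ℚ) ^ j := by
      rw [← pow_mul, ← pow_add]
      congr 1
      have : 1 ≤ n := by omega
      cases n with
      | zero => omega
      | succ k => simp only [Nat.succ_sub_one]; ring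
    rw [hexp]
    simp only [eq_intCast]
    push_cast
    field_simp
  rw [Finset.sum_congr rfl (fun j _ => hterm j)] at h
  rw [← Int.cast_sum] at h
  exact_mod_cast h

lemma psi_cong (p f : ℕ) (hp : p.Prime) (hf : 0 < f) (q : ℕ) (hq : q = p ^ f)
    (Ψ : PowerSeries ℤ) (hΨ : IsPsi p q Ψ) :
    ∀ n : ℕ, 1 ≤ n → (p : ℤ) ^ n ∣
      (coeff n Ψ - (if n = 1 then 1 else if n = q then -1 else 0) * (p : ℤ) ^ (n - 1)) := by
  have hq2 : 2 ≤ q := by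
    rw [hq]
    calc 2 = 2 ^ 1 := by norm_num
    _ ≤ p ^ 1 := Nat.pow_le_pow_left hp.two_le 1
    _ ≤ p ^ f := Nat.pow_le_pow_right hp.pos hf
  intro n
  induction n using Nat.strong_induction_on with
  | _ n IH =>
  intro hn1
  rcases eq_or_lt_of_le hn1 with h1 | h2
  · rw [← h1]
    rw [if_pos rfl]
    simp [hΨ.2.1]
  · -- 2 ≤ n
    have hiH : ∀ l, 1 ≤ l → l < n → (p : ℤ) ^ l ∣
        (coeff l Ψ - (if l = 1 then 1 else if l = q then -1 else 0) * (p : ℤ) ^ (l - 1)) :=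
      fun l h1 hl => IH l hl h1
    have hrecn := intrec p q hp Ψ hΨ n h2
    rw [Finset.sum_range_succ'] at hrecn
    simp only [Nat.zero_mul, pow_zero, one_mul, pow_zero, pow_one] at hrecn
    have han : coeff n Ψ
        = -∑ j ∈ range n, (p : ℤ) ^ ((j + 1) * (n - 1)) * coeff n (Ψ ^ q ^ (j + 1)) := by
      linarith
    rw [if_neg (by omega : ¬ n = 1)]
    by_cases hnq : n < q
    · have hz : ∀ j ∈ range n, (p : ℤ) ^ ((j + 1) * (n - 1)) * coeff n (Ψ ^ q ^ (j + 1)) = 0 := by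
        intro j _
        have : n < q ^ (j + 1) := lt_of_lt_of_le hnq (Nat.le_self_pow (by omega) q)
        rw [coeff_pow_eq_zero' hΨ.1 this, mul_zero]
      rw [han, Finset.sum_eq_zero hz, if_neg (by omega : ¬ n = q)]
      simp
    · push_neg at hnq  -- q ≤ n
      have h0mem : (0 : ℕ) ∈ range n := Finset.mem_range.2 (by omega)
      rw [← Finset.add_sum_erase _ _ h0mem] at han
      simp only [Nat.zero_add, one_mul, pow_one] at han
      -- han : coeff n Ψ = -(p^(n-1) * coeff n (Ψ^q) + ∑ j ∈ (range n).erase 0, ...)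
      have hrest : (p : ℤ) ^ n ∣
          ∑ j ∈ (range n).erase 0, (p : ℤ) ^ ((j + 1) * (n - 1)) * coeff n (Ψ ^ q ^ (j + 1)) := by
        refine Finset.dvd_sum fun j hj => ?_
        have hj1 : 1 ≤ j := by
          have := Finset.ne_of_mem_erase hj
          omega
        refine dvd_mul_of_dvd_left (pow_dvd_pow _ ?_) _
        have h2m : 2 * (n - 1) ≤ (j + 1) * (n - 1) := Nat.mul_le_mul_right _ (by omega)
        omega
      have hmain : (p : ℤ) ∣ (coeff n (Ψ ^ q) + (if n = q then -1 else 0)) := by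
        have hcong := congpow (p : ℤ) hΨ.1
          (fun l => if l = 1 then 1 else if l = q then -1 else 0)
          (by
            have h01 : ¬ (0:ℕ) = 1 := by omega
            have h0q : ¬ (0:ℕ) = q := by omega
            simp [h01, h0q]) n q hq2 hnq hiH
        set S := ∑ l ∈ finsuppAntidiag (range q) n,
          ∏ t ∈ range q, (if l t = 1 then (1:ℤ) else if l t = q then -1 else 0) with hS
        rcases eq_or_lt_of_le hnq with hnq' | hgt
        · -- n = q
          rw [if_pos hnq'.symm]
          have hd1 : (p : ℤ) ∣ (coeff n (Ψ ^ q) - S) := by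
            have hnq0 : n - q = 0 := by omega
            rw [hnq0, pow_zero, one_mul, zero_add, pow_one] at hcong
            exact hcong
          have hd2 : (p : ℤ) ∣ (S - 1) := by
            haveI : Fact p.Prime := ⟨hp⟩
            have hcast := sum_cast p
              (fun l => if l = 1 then (1:ℤ) else if l = q then -1 else 0) n q
            have hmk : (mk fun l => (((if l = 1 then (1:ℤ) else if l = q then -1 else 0) : ℤ)
                  : ZMod p)) = (X : (ZMod p)⟦X⟧) - X ^ q := by
              ext m
              rw [coeff_mk, map_sub, coeff_X, coeff_X_pow]
              split_ifs with h1' h2' <;> push_cast <;> try ring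
              all_goals (exfalso; omega)
            rw [hmk] at hcast
            haveI hchar : CharP (PowerSeries (ZMod p)) p :=
              charP_of_injective_ringHom (f := (C (R := ZMod p))) PowerSeries.C_injective p
            have hpow : ((X : (ZMod p)⟦X⟧) - X ^ q) ^ q = X ^ q - X ^ (q * q) := by
              rw [hq, sub_pow_char_pow, ← hq, ← pow_mul]
            rw [hpow] at hcast
            have : coeff n ((X : (ZMod p)⟦X⟧) ^ q - X ^ (q * q)) = 1 := by
              rw [map_sub, coeff_X_pow, coeff_X_pow, if_pos hnq'.symm, if_neg (by nlinarith)]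
              ring
            rw [this] at hcast
            have : ((S - 1 : ℤ) : ZMod p) = 0 := by rw [Int.cast_sub, Int.cast_one, sub_eq_zero]; exact hcast
            exact_mod_cast (ZMod.intCast_zmod_eq_zero_iff_dvd _ p).1 this
          have : coeff n (Ψ ^ q) + -1 = (coeff n (Ψ ^ q) - S) + (S - 1) := by ring
          rw [this]
          exact dvd_add hd1 hd2
        · -- q < n
          rw [if_neg (by omega), add_zero]
          have h1 : (p : ℤ) ∣ (coeff n (Ψ ^ q) - (p:ℤ) ^ (n - q) * S) := by
            refine dvd_trans ?_ hcong
            exact dvd_pow_self _ (by omega)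
          have h2' : (p : ℤ) ∣ (p:ℤ) ^ (n - q) * S :=
            dvd_mul_of_dvd_left (dvd_pow_self _ (by omega)) _
          have : coeff n (Ψ ^ q) = (coeff n (Ψ ^ q) - (p:ℤ) ^ (n - q) * S)
              + (p:ℤ) ^ (n - q) * S := by ring
          rw [this]
          exact dvd_add h1 h2'
      -- assemble
      obtain ⟨w, hw⟩ := hmain
      obtain ⟨v, hv⟩ := hrest
      have hCq : coeff n (Ψ ^ q) = (p:ℤ) * w - (if n = q then -1 else 0) := by linarith
      have hc : (p:ℤ) ^ n = (p:ℤ) ^ (n - 1) * p := by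
        rw [← pow_succ]
        congr 1
        omega
      refine ⟨-(w + v), ?_⟩
      rw [han, hv, hCq, hc]
      ring



lemma eps_zero (q : ℕ) (hq2 : 2 ≤ q) :
    (if ∃ e : ℕ, (0:ℕ) = q ^ e then (1:ℤ) else 0) = 0 := by
  rw [if_neg]
  rintro ⟨e, he⟩
  have := (Nat.pow_pos (show 0 < q by omega) : 0 < q ^ e)
  omega

lemma beta_cong (p f : ℕ) (hp : p.Prime) (hf : 0 < f) (q : ℕ) (hq : q = p ^ f)
    (Ψ β : PowerSeries ℤ) (hΨ : IsPsi p q Ψ) (hβ : IsCompInv Ψ β) :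
    ∀ n : ℕ, 1 ≤ n → (p : ℤ) ^ n ∣
      (coeff n β - (if ∃ e : ℕ, n = q ^ e then 1 else 0) * (p : ℤ) ^ (n - 1)) := by
  have hq2 : 2 ≤ q := by
    rw [hq]
    calc 2 = 2 ^ 1 := by norm_num
    _ ≤ p ^ 1 := Nat.pow_le_pow_left hp.two_le 1
    _ ≤ p ^ f := Nat.pow_le_pow_right hp.pos hf
  have hpsi := psi_cong p f hp hf q hq Ψ hΨ
  intro n
  induction n using Nat.strong_induction_on with
  | _ n IH =>
  intro hn1
  rcases eq_or_lt_of_le hn1 with h1 | h2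
  · rw [← h1, if_pos ⟨0, (pow_zero q).symm⟩]
    simp [hβ.2.1]
  · -- 2 ≤ n
    have hiH : ∀ l, 1 ≤ l → l < n → (p : ℤ) ^ l ∣
        (coeff l β - (if ∃ e : ℕ, l = q ^ e then 1 else 0) * (p : ℤ) ^ (l - 1)) :=
      fun l hl1 hl => IH l hl hl1
    have h := hβ.2.2.1 n
    rw [coeff_X, if_neg (by omega)] at h
    rw [Finset.sum_range_succ'] at h
    have ha0 : coeff 0 Ψ = 0 := by
      rw [coeff_zero_eq_constantCoeff]; exact hΨ.1
    rw [ha0, zero_mul, add_zero] at h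
    have h0mem : (0 : ℕ) ∈ range n := Finset.mem_range.2 (by omega)
    rw [← Finset.add_sum_erase _ _ h0mem] at h
    have e01 : coeff (0 + 1) Ψ * coeff n (β ^ (0 + 1)) = coeff n β := by
      simp only [Nat.zero_add, pow_one, hΨ.2.1, one_mul]
    rw [e01] at h
    -- generic term divisibility
    have hterm : ∀ i ∈ (range n).erase 0, (i + 1) ≠ q →
        (p : ℤ) ^ n ∣ coeff (i + 1) Ψ * coeff n (β ^ (i + 1)) := by
      intro i hi hne
      have hi1 : 1 ≤ i := by
        have := Finset.ne_of_mem_erase hi; omega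
      have hin : i + 1 ≤ n := by
        have := Finset.mem_range.1 (Finset.mem_of_mem_erase hi); omega
      have hA : (p : ℤ) ^ (i + 1) ∣ coeff (i + 1) Ψ := by
        have hx := hpsi (i + 1) (by omega)
        rw [if_neg (by omega), if_neg hne, zero_mul, sub_zero] at hx
        exact hx
      have hB : (p : ℤ) ^ (n - (i + 1)) ∣ coeff n (β ^ (i + 1)) := by
        have hcong := congpow (p : ℤ) hβ.1 (fun l => if ∃ e : ℕ, l = q ^ e then 1 else 0)
          (eps_zero q hq2) n (i + 1) (by omega) hin hiH
        obtain ⟨t, ht⟩ := hcong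
        exact ⟨(∑ l ∈ finsuppAntidiag (range (i + 1)) n,
          ∏ s ∈ range (i + 1), if ∃ e : ℕ, l s = q ^ e then (1:ℤ) else 0) + (p : ℤ) * t,
          by linear_combination ht⟩
      have hc : (p : ℤ) ^ n = (p : ℤ) ^ (i + 1) * (p : ℤ) ^ (n - (i + 1)) := by
        rw [← pow_add]; congr 1; omega
      rw [hc]
      exact mul_dvd_mul hA hB
    by_cases hqn : q ≤ n
    · -- extract the i = q - 1 term
      have hqmem : q - 1 ∈ (range n).erase 0 :=
        Finset.mem_erase.2 ⟨by omega, Finset.mem_range.2 (by omega)⟩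
      rw [← Finset.add_sum_erase _ _ hqmem] at h
      have hq1 : q - 1 + 1 = q := by omega
      rw [hq1] at h
      -- rest divisibility
      obtain ⟨r, hr⟩ : (p : ℤ) ^ n ∣ ∑ i ∈ ((range n).erase 0).erase (q - 1),
          coeff (i + 1) Ψ * coeff n (β ^ (i + 1)) := by
        refine Finset.dvd_sum fun i hi => ?_
        refine hterm i (Finset.mem_of_mem_erase hi) ?_
        have h1 := Finset.ne_of_mem_erase hi
        have h2' := Finset.ne_of_mem_erase (Finset.mem_of_mem_erase hi)
        omega
      -- S and its congruence
      have hcong := congpow (p : ℤ) hβ.1 (fun l => if ∃ e : ℕ, l = q ^ e then 1 else 0)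
        (eps_zero q hq2) n q hq2 hqn hiH
      set S : ℤ := ∑ l ∈ finsuppAntidiag (range q) n,
        ∏ t ∈ range q, (if ∃ e : ℕ, l t = q ^ e then (1:ℤ) else 0) with hSdef
      obtain ⟨v, hv⟩ := hcong
      -- S mod p
      have hSmod : (p : ℤ) ∣ S - (if ∃ e : ℕ, n = q ^ e then 1 else 0) := by
        haveI : Fact p.Prime := ⟨hp⟩
        have hcast := sum_cast p (fun l => if ∃ e : ℕ, l = q ^ e then (1:ℤ) else 0) n q
        have hfun : (fun l => (((if ∃ e : ℕ, l = q ^ e then (1:ℤ) else 0) : ℤ) : ZMod p))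
            = (fun m => if ∃ e : ℕ, m = q ^ e then (1 : ZMod p) else 0) := by
          funext l; split_ifs <;> simp
        rw [hfun] at hcast
        rw [coeff_indicator_pow p f hp hf q hq n] at hcast
        have hiff : (∃ e : ℕ, n = q ^ (e + 1)) ↔ (∃ e : ℕ, n = q ^ e) := by
          constructor
          · rintro ⟨e, he⟩; exact ⟨e + 1, he⟩
          · rintro ⟨e, he⟩
            have he0 : e ≠ 0 := by rintro rfl; rw [pow_zero] at he; omega
            exact ⟨e - 1, by rw [he]; congr 1; omega⟩
        have hz : ((S - (if ∃ e : ℕ, n = q ^ e then (1:ℤ) else 0) : ℤ) : ZMod p) = 0 := by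
          push_cast
          rw [hcast, if_congr hiff rfl rfl, sub_self]
        exact_mod_cast (ZMod.intCast_zmod_eq_zero_iff_dvd _ p).1 hz
      obtain ⟨w, hw⟩ := hSmod
      -- psi at q
      have hpq := hpsi q (by omega)
      rw [if_neg (by omega), if_pos rfl] at hpq
      obtain ⟨u, hu⟩ := hpq
      -- exponents
      obtain ⟨a, ha⟩ : ∃ a, q = a + 1 := ⟨q - 1, by omega⟩
      obtain ⟨b, hb⟩ : ∃ b, n = q + b := ⟨n - q, by omega⟩
      have e1 : n - q = b := by omega
      have e3 : q - 1 = a := by omega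
      have e4 : n - 1 = a + b + 1 - 1 := by omega
      have hbn : coeff n β = -(coeff q Ψ * coeff n (β ^ q))
          - ∑ i ∈ ((range n).erase 0).erase (q - 1),
            coeff (i + 1) Ψ * coeff n (β ^ (i + 1)) := by linarith
      rw [e1] at hv
      rw [e3, show (p:ℤ) ^ q = (p:ℤ) ^ (a + 1) from by rw [ha]] at hu
      have hu' : coeff q Ψ = (p:ℤ) ^ (a + 1) * u - (p:ℤ) ^ a := by linarith
      have hv' : coeff n (β ^ q) = (p:ℤ) ^ b * S + (p:ℤ) ^ (b + 1) * v := by linarith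
      have hS' : S = (if ∃ e : ℕ, n = q ^ e then (1:ℤ) else 0) + (p:ℤ) * w := by linarith
      have hgoal : coeff n β - (if ∃ e : ℕ, n = q ^ e then (1:ℤ) else 0) * (p:ℤ) ^ (n - 1)
          = (p:ℤ) ^ n * (-(u * S + (p:ℤ) * u * v - w - v) - r) := by
        rw [hbn, hr, hu', hv', hS']
        rw [show n - 1 = a + b by omega, show n = a + 1 + b by omega]
        ring
      rw [hgoal]
      exact Dvd.intro _ rfl
    · -- n < q : every term has i + 1 < q
      push_neg at hqn
      obtain ⟨r, hr⟩ : (p : ℤ) ^ n ∣ ∑ i ∈ (range n).erase 0,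
          coeff (i + 1) Ψ * coeff n (β ^ (i + 1)) := by
        refine Finset.dvd_sum fun i hi => ?_
        refine hterm i hi ?_
        have := Finset.mem_range.1 (Finset.mem_of_mem_erase hi)
        omega
      have hεn : (if ∃ e : ℕ, n = q ^ e then (1:ℤ) else 0) = 0 := by
        rw [if_neg]
        rintro ⟨e, he⟩
        rcases Nat.eq_zero_or_pos e with rfl | he1
        · rw [pow_zero] at he; omega
        · have : q ≤ q ^ e := Nat.le_self_pow (by omega) q
          omega
      rw [hεn, zero_mul, sub_zero]
      have hbn : coeff n β = -((p:ℤ) ^ n * r) := by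
        rw [← hr]; linarith
      rw [hbn]
      exact ⟨-r, by ring⟩

end BetaAux

/-- the inverse series `β_q ∈ T + T²ℤ[[T]]` of `Ψ_q` has exact disc of
convergence `{T ∈ ℂ_p : v_p(T) > -1} = {T : ‖T‖ < p}`: it converges there and diverges
at some point of the boundary `v_p(T) = -1`. Here `ℂ_p` is modelled as a complete
algebraically closed nonarchimedean normed field `K` with `‖p‖ = p⁻¹`. -/
theorem beta_disc_of_convergence (p f : ℕ) (hp : p.Prime) (hf : 0 < f)
    (q : ℕ) (hq : q = p ^ f)
    (Ψ β : PowerSeries ℤ) (hΨ : IsPsi p q Ψ) (hβ : IsCompInv Ψ β)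
    (K : Type) [NormedField K] [CompleteSpace K] [IsAlgClosed K]
    (hna : IsUltrametricDist K) (hpK : ‖(p : K)‖ = (p : ℝ)⁻¹) :
    (∀ x : K, ‖x‖ < (p : ℝ) →
      Summable (fun i : ℕ => ((PowerSeries.coeff i β : ℤ) : K) * x ^ i)) ∧
    (∃ x : K, ‖x‖ = (p : ℝ) ∧
      ¬ Summable (fun i : ℕ => ((PowerSeries.coeff i β : ℤ) : K) * x ^ i)) := by
  haveI := hna
  have hq2 : 2 ≤ q := by
    rw [hq]
    calc 2 = 2 ^ 1 := by norm_num
    _ ≤ p ^ 1 := Nat.pow_le_pow_left hp.two_le 1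
    _ ≤ p ^ f := Nat.pow_le_pow_right hp.pos hf
  have hbc := BetaAux.beta_cong p f hp hf q hq Ψ β hΨ hβ
  have hp0 : (0:ℝ) < p := by exact_mod_cast hp.pos
  have hp1 : (1:ℝ) < p := by exact_mod_cast hp.one_lt
  have hb0 : coeff 0 β = 0 := by
    rw [coeff_zero_eq_constantCoeff]; exact hβ.1
  -- norm bound for the coefficients
  have hnb : ∀ i : ℕ, 1 ≤ i → ‖((coeff i β : ℤ) : K)‖ ≤ ((p:ℝ)⁻¹) ^ (i - 1) := by
    intro i hi
    obtain ⟨u, hu⟩ := hbc i hi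
    obtain ⟨j, rfl⟩ : ∃ j, i = j + 1 := ⟨i - 1, by omega⟩
    have hexp : j + 1 - 1 = j := rfl
    rw [hexp] at hu ⊢
    have hco : coeff (j + 1) β
        = (p:ℤ) ^ j * ((if ∃ e : ℕ, j + 1 = q ^ e then (1:ℤ) else 0) + (p:ℤ) * u) := by
      linear_combination hu
    rw [hco, Int.cast_mul, norm_mul]
    have h1 : ‖(((p:ℤ) ^ j : ℤ) : K)‖ = ((p:ℝ)⁻¹) ^ j := by
      push_cast
      rw [norm_pow, hpK]
    have h2 : ‖((((if ∃ e : ℕ, j + 1 = q ^ e then (1:ℤ) else 0) + (p:ℤ) * u : ℤ)) : K)‖ ≤ 1 :=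
      IsUltrametricDist.norm_intCast_le_one K _
    calc ‖(((p:ℤ) ^ j : ℤ) : K)‖ * ‖((((if ∃ e : ℕ, j + 1 = q ^ e then (1:ℤ) else 0) + (p:ℤ) * u : ℤ)) : K)‖
        ≤ ‖(((p:ℤ) ^ j : ℤ) : K)‖ * 1 := by
          exact mul_le_mul_of_nonneg_left h2 (norm_nonneg _)
    _ = ((p:ℝ)⁻¹) ^ j := by rw [mul_one, h1]
  constructor
  · intro x hx
    have hr0 : 0 ≤ ‖x‖ * (p:ℝ)⁻¹ := by positivity
    have hr1 : ‖x‖ * (p:ℝ)⁻¹ < 1 := by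
      rw [← div_eq_mul_inv, div_lt_one hp0]
      exact hx
    refine Summable.of_norm_bounded (g := fun i => (p:ℝ) * (‖x‖ * (p:ℝ)⁻¹) ^ i)
      ((summable_geometric_of_lt_one hr0 hr1).mul_left _) ?_
    intro i
    rcases Nat.eq_zero_or_pos i with rfl | hi
    · simp only [hb0, Int.cast_zero, pow_zero, zero_mul, norm_zero, mul_one]
      positivity
    · rw [norm_mul, norm_pow]
      calc ‖((coeff i β : ℤ) : K)‖ * ‖x‖ ^ i
          ≤ ((p:ℝ)⁻¹) ^ (i - 1) * ‖x‖ ^ i := by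
            exact mul_le_mul_of_nonneg_right (hnb i hi) (by positivity)
      _ = (p:ℝ) * (‖x‖ * (p:ℝ)⁻¹) ^ i := by
          obtain ⟨j, rfl⟩ : ∃ j, i = j + 1 := ⟨i - 1, by omega⟩
          rw [Nat.add_sub_cancel, mul_pow, pow_succ ((p:ℝ)⁻¹) j]
          field_simp
  · refine ⟨(p:K)⁻¹, by rw [norm_inv, hpK, inv_inv], ?_⟩
    intro hsum
    have ht : Filter.Tendsto (fun i : ℕ => ‖((coeff i β : ℤ) : K) * ((p:K)⁻¹) ^ i‖)
        Filter.atTop (nhds 0) := by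
      simpa using hsum.tendsto_atTop_zero.norm
    have hev : ∀ᶠ i in Filter.atTop,
        ‖((coeff i β : ℤ) : K) * ((p:K)⁻¹) ^ i‖ < (p:ℝ) :=
      ht.eventually_lt_const hp0
    obtain ⟨N, hN⟩ := Filter.eventually_atTop.1 hev
    have hn1 : 1 ≤ q ^ N := Nat.one_le_pow _ _ (by omega)
    have hNn : N ≤ q ^ N := (Nat.lt_pow_self (n := N) (by omega : 1 < q)).le
    have hlt := hN (q ^ N) hNn
    obtain ⟨u, hu⟩ := hbc (q ^ N) hn1
    rw [if_pos ⟨N, rfl⟩, one_mul] at hu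
    obtain ⟨m, hm⟩ : ∃ m, q ^ N = m + 1 := ⟨q ^ N - 1, by omega⟩
    rw [show q ^ N - 1 = m from by omega,
      show (p:ℤ) ^ q ^ N = (p:ℤ) ^ (m + 1) from by rw [hm]] at hu
    have hco : coeff (q ^ N) β = (p:ℤ) ^ m * (1 + (p:ℤ) * u) := by
      linear_combination hu
    have hnz : ‖((1 + (p:ℤ) * u : ℤ) : K)‖ = 1 := by
      have hle : ‖(((p:ℤ) * u : ℤ) : K)‖ < 1 := by
        push_cast
        rw [norm_mul, hpK]
        calc (p:ℝ)⁻¹ * ‖((u:ℤ):K)‖ ≤ (p:ℝ)⁻¹ * 1 := by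
              exact mul_le_mul_of_nonneg_left
                (IsUltrametricDist.norm_intCast_le_one K u) (by positivity)
        _ < 1 := by
              rw [mul_one]
              rw [inv_lt_one_iff₀]
              right; exact hp1
      have h1 : ‖((1 + (p:ℤ) * u : ℤ) : K)‖ ≤ 1 :=
        IsUltrametricDist.norm_intCast_le_one K _
      have h2 : (1:ℝ) ≤ max ‖((1 + (p:ℤ) * u : ℤ) : K)‖ ‖(((p:ℤ) * u : ℤ) : K)‖ := by
        have heq : ((1:ℤ) : K) = ((1 + (p:ℤ) * u : ℤ) : K) + (-(((p:ℤ) * u : ℤ) : K)) := by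
          push_cast; ring
        calc (1:ℝ) = ‖((1:ℤ) : K)‖ := by simp
        _ = ‖((1 + (p:ℤ) * u : ℤ) : K) + (-(((p:ℤ) * u : ℤ) : K))‖ := by rw [← heq]
        _ ≤ max ‖((1 + (p:ℤ) * u : ℤ) : K)‖ ‖(-(((p:ℤ) * u : ℤ) : K))‖ :=
            IsUltrametricDist.norm_add_le_max _ _
        _ = max ‖((1 + (p:ℤ) * u : ℤ) : K)‖ ‖(((p:ℤ) * u : ℤ) : K)‖ := by rw [norm_neg]
      rcases le_max_iff.1 h2 with h | h
      · exact le_antisymm h1 h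
      · linarith
    have hnorm : ‖((coeff (q ^ N) β : ℤ) : K) * ((p:K)⁻¹) ^ (q ^ N)‖ = (p:ℝ) := by
      rw [hco, Int.cast_mul, norm_mul, norm_mul, hnz, mul_one, norm_pow, norm_inv, hpK, inv_inv]
      have hppow : ‖(((p:ℤ) ^ m : ℤ) : K)‖ = ((p:ℝ)⁻¹) ^ m := by
        push_cast
        rw [norm_pow, hpK]
      rw [hppow, hm, pow_succ (p:ℝ) m, ← mul_assoc, ← mul_pow,
        inv_mul_cancel₀ hp0.ne', one_pow, one_mul]
    rw [hnorm] at hlt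
    exact lt_irrefl _ hlt
end
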